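/- Let A_ℓ be the alternating product L·U·L·U·⋯ of length ℓ (starting with L). Then for any product B of ℓ factors from {L,U}, trace(A_ℓ) ≥ trace(B). -/

import Mathlib

def L : Matrix (Fin 2) (Fin 2) ℕ := !![1,0;1,1]
def U : Matrix (Fin 2) (Fin 2) ℕ := !![1,1;0,1]

/-- The alternating word L, U, L, U, … of length ℓ. -/
def altList (ℓ : ℕ) : List (Matrix (Fin 2) (Fin 2) ℕ) :=
  (List.range ℓ).map (fun i => if i % 2 = 0 then L else U)

namespace Stmt9Aux

/-- Pair sequence: `(TQ n).1` is the trace of the alternating product of length `n`,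
`(TQ n).2` is the sum of its off-diagonal entries. -/
def TQ : ℕ → ℕ × ℕ
  | 0 => (2, 0)
  | 1 => (2, 1)
  | n+2 => ((TQ n).1 + (TQ (n+1)).2, (TQ n).2 + (TQ (n+1)).1)

def T (n : ℕ) : ℕ := (TQ n).1
def Q (n : ℕ) : ℕ := (TQ n).2

lemma T_rec (n : ℕ) : T (n+2) = T n + Q (n+1) := by simp [T, Q, TQ]
lemma Q_rec (n : ℕ) : Q (n+2) = Q n + T (n+1) := by simp [T, Q, TQ]

lemma CD : ∀ n : ℕ,
    (Nat.fib (n+1) + T (n+1) ≤ T (n+2) ∧ Nat.fib (n+1) + Q (n+1) ≤ Q (n+2)) ∧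
    (Nat.fib (n+2) + T (n+2) ≤ T (n+3) ∧ Nat.fib (n+2) + Q (n+2) ≤ Q (n+3))
  | 0 => by decide
  | n+1 => by
      obtain ⟨⟨hC, hD⟩, ⟨hC', hD'⟩⟩ := CD n
      refine ⟨⟨hC', hD'⟩, ?_, ?_⟩
      · show Nat.fib (n+3) + T (n+3) ≤ T (n+4)
        have hf : Nat.fib (n+3) = Nat.fib (n+1) + Nat.fib (n+2) := Nat.fib_add_two
        have h1 : T (n+3) = T (n+1) + Q (n+2) := T_rec (n+1)
        have h2 : T (n+4) = T (n+2) + Q (n+3) := T_rec (n+2)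
        omega
      · show Nat.fib (n+3) + Q (n+3) ≤ Q (n+4)
        have hf : Nat.fib (n+3) = Nat.fib (n+1) + Nat.fib (n+2) := Nat.fib_add_two
        have h1 : Q (n+3) = Q (n+1) + T (n+2) := Q_rec (n+1)
        have h2 : Q (n+4) = Q (n+2) + T (n+3) := Q_rec (n+2)
        omega

/-- The key invariant: entrywise bounds on any product of `L`s and `U`s. -/
lemma key : ∀ (w : List (Matrix (Fin 2) (Fin 2) ℕ)), (∀ A ∈ w, A = L ∨ A = U) →
    w.prod 0 0 ≤ Nat.fib (w.length + 1) ∧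
    w.prod 0 1 ≤ Nat.fib (w.length + 1) ∧
    w.prod 1 0 ≤ Nat.fib (w.length + 1) ∧
    w.prod 1 1 ≤ Nat.fib (w.length + 1) ∧
    w.prod 0 0 + w.prod 0 1 ≤ Nat.fib (w.length + 2) ∧
    w.prod 1 0 + w.prod 1 1 ≤ Nat.fib (w.length + 2) ∧
    w.prod 0 1 + w.prod 1 0 ≤ Q w.length ∧
    w.prod 0 0 + w.prod 0 1 + w.prod 1 0 ≤ Q (w.length + 1) ∧
    w.prod 0 1 + w.prod 1 0 + w.prod 1 1 ≤ Q (w.length + 1) ∧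
    w.prod 0 0 + w.prod 1 1 ≤ T w.length ∧
    w.prod 0 0 + w.prod 0 1 + w.prod 1 1 ≤ T (w.length + 1) ∧
    w.prod 0 0 + w.prod 1 0 + w.prod 1 1 ≤ T (w.length + 1) := by
  intro w
  induction w using List.reverseRecOn with
  | nil =>
    intro _
    norm_num [Matrix.one_apply, T, Q, TQ]
  | append_singleton v X ih =>
    intro hw
    have hv : ∀ A ∈ v, A = L ∨ A = U := fun A hA => hw A (by simp [hA])
    have hX : X = L ∨ X = U := hw X (by simp)
    obtain ⟨ha, hb, hc, hd, hab, hcd, hbc, habc, hbcd, had, habd, hacd⟩ := ih hv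
    set n := v.length with hn
    have hlen : (v ++ [X]).length = n + 1 := by simp [hn]
    have hprod : (v ++ [X]).prod = v.prod * X := by simp
    set a := v.prod 0 0
    set b := v.prod 0 1
    set c := v.prod 1 0
    set d := v.prod 1 1
    -- sequence facts
    have hf3 : Nat.fib (n+3) = Nat.fib (n+1) + Nat.fib (n+2) := Nat.fib_add_two
    have hf2 : Nat.fib (n+2) = Nat.fib n + Nat.fib (n+1) := Nat.fib_add_two
    have hfm : Nat.fib (n+1) ≤ Nat.fib (n+2) := Nat.fib_le_fib_succ
    have hT : T (n+2) = T n + Q (n+1) := T_rec n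
    have hQ : Q (n+2) = Q n + T (n+1) := Q_rec n
    have hCD := (CD n).1
    have hC : Nat.fib (n+1) + T (n+1) ≤ T (n+2) := hCD.1
    have hD : Nat.fib (n+1) + Q (n+1) ≤ Q (n+2) := hCD.2
    rw [hlen, hprod]
    simp only [show n+1+1 = n+2 by omega, show n+1+2 = n+3 by omega]
    rcases hX with rfl | rfl
    · have e00 : (v.prod * L) 0 0 = a + b := by
        simp [L, Matrix.mul_apply, Fin.sum_univ_two]
        rfl
      have e01 : (v.prod * L) 0 1 = b := by
        simp [L, Matrix.mul_apply, Fin.sum_univ_two]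
        rfl
      have e10 : (v.prod * L) 1 0 = c + d := by
        simp [L, Matrix.mul_apply, Fin.sum_univ_two]
        rfl
      have e11 : (v.prod * L) 1 1 = d := by
        simp [L, Matrix.mul_apply, Fin.sum_univ_two]
        rfl
      rw [e00, e01, e10, e11]
      omega
    · have e00 : (v.prod * U) 0 0 = a := by
        simp [U, Matrix.mul_apply, Fin.sum_univ_two]
        rfl
      have e01 : (v.prod * U) 0 1 = a + b := by
        simp [U, Matrix.mul_apply, Fin.sum_univ_two]
        rfl
      have e10 : (v.prod * U) 1 0 = c := by
        simp [U, Matrix.mul_apply, Fin.sum_univ_two]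
        rfl
      have e11 : (v.prod * U) 1 1 = c + d := by
        simp [U, Matrix.mul_apply, Fin.sum_univ_two]
        rfl
      rw [e00, e01, e10, e11]
      omega

/-- Entries of the even-length alternating product. -/
def EF : ℕ → ℕ × ℕ
  | 0 => (1, 0)
  | k+1 => ((EF k).1 + (EF k).2, (EF k).1 + 2*(EF k).2)

lemma alt_succ (n : ℕ) :
    altList (n+1) = altList n ++ [if n % 2 = 0 then L else U] := by
  simp [altList, List.range_succ]

lemma alt_even : ∀ k : ℕ, (altList (2*k)).prod =
    !![(EF k).1, (EF k).2; (EF k).2, (EF k).1 + (EF k).2]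
  | 0 => by
    simp only [Nat.mul_zero, altList, List.range_zero, List.map_nil, List.prod_nil]
    ext i j
    fin_cases i <;> fin_cases j <;> simp [Matrix.one_apply, EF]
  | k+1 => by
    have h1 : 2*(k+1) = (2*k+1) + 1 := by ring
    have h2 : altList (2*k+1) = altList (2*k) ++ [L] := by
      rw [alt_succ]
      simp [Nat.mul_mod_right]
    have h3 : altList (2*(k+1)) = altList (2*k+1) ++ [U] := by
      rw [h1, alt_succ]
      norm_num [Nat.add_mod, Nat.mul_mod_right]
    rw [h3, h2]
    simp only [List.prod_append, List.prod_cons, List.prod_nil, mul_one]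
    rw [alt_even k]
    have hEF : EF (k+1) = ((EF k).1 + (EF k).2, (EF k).1 + 2*(EF k).2) := by
      simp [EF]
    rw [hEF]
    ext i j
    fin_cases i <;> fin_cases j <;>
      simp [L, U, Matrix.mul_apply, Fin.sum_univ_two] <;> ring

lemma alt_odd (k : ℕ) : (altList (2*k+1)).prod =
    !![(EF k).1 + (EF k).2, (EF k).2; (EF k).1 + 2*(EF k).2, (EF k).1 + (EF k).2] := by
  have h2 : altList (2*k+1) = altList (2*k) ++ [L] := by
    rw [alt_succ]
    simp [Nat.mul_mod_right]
  rw [h2]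
  simp only [List.prod_append, List.prod_cons, List.prod_nil, mul_one]
  rw [alt_even k]
  ext i j
  fin_cases i <;> fin_cases j <;>
    simp [L, Matrix.mul_apply, Fin.sum_univ_two] <;> ring

lemma TQ_eq_EF : ∀ k : ℕ,
    T (2*k) = 2*(EF k).1 + (EF k).2 ∧ T (2*k+1) = 2*(EF k).1 + 2*(EF k).2 ∧
    Q (2*k) = 2*(EF k).2 ∧ Q (2*k+1) = (EF k).1 + 3*(EF k).2
  | 0 => by
    refine ⟨rfl, rfl, rfl, rfl⟩
  | k+1 => by
    obtain ⟨h1, h2, h3, h4⟩ := TQ_eq_EF k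
    have hEF1 : (EF (k+1)).1 = (EF k).1 + (EF k).2 := by simp [EF]
    have hEF2 : (EF (k+1)).2 = (EF k).1 + 2*(EF k).2 := by simp [EF]
    have e1 : 2*(k+1) = 2*k+2 := by ring
    have e2 : 2*(k+1)+1 = 2*k+3 := by ring
    have hT2 : T (2*k+2) = T (2*k) + Q (2*k+1) := T_rec (2*k)
    have hT3 : T (2*k+3) = T (2*k+1) + Q (2*k+2) := T_rec (2*k+1)
    have hQ2 : Q (2*k+2) = Q (2*k) + T (2*k+1) := Q_rec (2*k)
    have hQ3 : Q (2*k+3) = Q (2*k+1) + T (2*k+2) := Q_rec (2*k+1)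
    rw [show 2*(k+1) = 2*k+2 by ring]
    rw [show 2*k+2+1 = 2*k+3 by ring]
    rw [hEF1, hEF2]
    omega

lemma trace_alt (ℓ : ℕ) : Matrix.trace (altList ℓ).prod = T ℓ := by
  rcases Nat.even_or_odd ℓ with ⟨k, hk⟩ | ⟨k, hk⟩
  · have hk' : ℓ = 2*k := by omega
    subst hk'
    rw [alt_even k, Matrix.trace_fin_two]
    have := (TQ_eq_EF k).1
    simp only [Matrix.of_apply, Matrix.cons_val_zero, Matrix.cons_val_one,
      Matrix.head_cons, Matrix.cons_val', Matrix.empty_val', Matrix.cons_val_fin_one,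
      Matrix.head_fin_const]
    omega
  · subst hk
    rw [alt_odd k, Matrix.trace_fin_two]
    have := (TQ_eq_EF k).2.1
    simp only [Matrix.of_apply, Matrix.cons_val_zero, Matrix.cons_val_one,
      Matrix.head_cons, Matrix.cons_val', Matrix.empty_val', Matrix.cons_val_fin_one,
      Matrix.head_fin_const]
    omega

end Stmt9Aux

theorem stmt_9 (ℓ : ℕ) (w : List (Matrix (Fin 2) (Fin 2) ℕ))
    (hw : ∀ A ∈ w, A = L ∨ A = U) (hlen : w.length = ℓ) :
    Matrix.trace w.prod ≤ Matrix.trace (altList ℓ).prod := by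
  have hkey := (Stmt9Aux.key w hw).2.2.2.2.2.2.2.2.2.1
  rw [Stmt9Aux.trace_alt, Matrix.trace_fin_two, ← hlen]
  exact hkey
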